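/- Each action of MMA⁻ (actions (1), (3), (4), (5), (5')) preserves the set of unifiers: if the finite equation set E' is obtained from E by one such action, then a substitution θ is a unifier of E if and only if θ is a unifier of E'. -/

import Mathlib

/-! # First-order terms, substitutions, unification -/

inductive Term (F : Type) (V : Type) : Type
  | var : V → Term F V
  | app : F → List (Term F V) → Term F V

namespace Term

variable {F V : Type}

/-- The variable `v` occurs in the term. -/
inductive VarIn (v : V) : Term F V → Prop
  | var : VarIn v (Term.var v)
  | app {f : F} {ts : List (Term F V)} {t : Term F V} :
      t ∈ ts → VarIn v t → VarIn v (Term.app f ts)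

/-- A term is ground if it contains no variables. -/
def Ground (t : Term F V) : Prop := ∀ v, ¬ VarIn v t

/-- Application of a substitution (a map from variables to terms) to a term. -/
def subst (σ : V → Term F V) : Term F V → Term F V
  | var x => σ x
  | app f ts => app f (ts.attach.map fun ⟨t, _⟩ => t.subst σ)

/-- Number of occurrences of the variable `v` in a term. -/
def count [DecidableEq V] (v : V) : Term F V → ℕ
  | var x => if x = v then 1 else 0
  | app _ ts => (ts.attach.map fun ⟨t, _⟩ => t.count v).sum

/-- A term (or atom) is linear if no variable occurs in it more than once. -/
def Linear [DecidableEq V] (t : Term F V) : Prop := ∀ v, count v t ≤ 1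

def IsVar : Term F V → Prop
  | var _ => True
  | app _ _ => False

end Term

/-- A substitution. -/
abbrev Subst (F V : Type) := V → Term F V

/-- Composition of substitutions: `(σ.comp η)` is `ση`. -/
def Subst.comp {F V : Type} (σ η : Subst F V) : Subst F V := fun v => (σ v).subst η

/-- The substitution `{X/t}`. -/
def subst1 {F V : Type} [DecidableEq V] (X : V) (t : Term F V) : Subst F V :=
  fun v => if v = X then t else Term.var v

variable {F V : Type}

/-- `σ` unifies the two terms (or atoms) `A` and `H`. -/
def IsUnifierPair (σ : Subst F V) (A H : Term F V) : Prop := A.subst σ = H.subst σ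

/-- `σ` is a most general unifier of `A` and `H`. -/
def IsMGUPair (σ : Subst F V) (A H : Term F V) : Prop :=
  IsUnifierPair σ A H ∧ ∀ τ, IsUnifierPair τ A H → ∃ η, τ = σ.comp η

/-- An equation between terms. -/
abbrev Eqn (F V : Type) := Term F V × Term F V

/-- A set of equations. -/
abbrev EqSet (F V : Type) := Set (Eqn F V)

def Eqn.subst (σ : Subst F V) (e : Eqn F V) : Eqn F V := (e.1.subst σ, e.2.subst σ)

/-- `σ` is a unifier of the equation set `E`. -/
def IsUnifier (σ : Subst F V) (E : EqSet F V) : Prop := ∀ e ∈ E, e.1.subst σ = e.2.subst σ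

def Unifiable (E : EqSet F V) : Prop := ∃ σ, IsUnifier σ E

/-- `σ` is a most general unifier of the equation set `E`. -/
def IsMGU (σ : Subst F V) (E : EqSet F V) : Prop :=
  IsUnifier σ E ∧ ∀ τ, IsUnifier τ E → ∃ η, τ = σ.comp η

/-! # The Martelli–Montanari algorithm (MMA) and its occur-check-less version MMA⁻ -/

/-- The variable `X` occurs in the equation `e`. -/
def occursInEqn (X : V) (e : Eqn F V) : Prop := Term.VarIn X e.1 ∨ Term.VarIn X e.2

/-- The variable `X` occurs in equations of `E` other than `e`. -/
def occursElsewhere (X : V) (e : Eqn F V) (E : EqSet F V) : Prop :=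
  ∃ e' ∈ E, e' ≠ e ∧ occursInEqn X e'

/-- Action (2) of MMA is applicable: `E` contains a clash `f(s₁,…,sₘ) = g(t₁,…,tₙ)`
(distinct function symbols; in a signature with arities, the same name with different
numbers of arguments also counts as distinct symbols). -/
def Clash (E : EqSet F V) : Prop :=
  ∃ f ss g ts, (Term.app f ss, Term.app g ts) ∈ E ∧ (f ≠ g ∨ ss.length ≠ ts.length)

/-- Action (6) of MMA (the occur-check failure) is applicable to `E`. -/
def OccApplicable (E : EqSet F V) : Prop :=
  ∃ X t, (Term.var X, t) ∈ E ∧ Term.var X ≠ t ∧ Term.VarIn X t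

/-- A (non-failing) step of MMA: actions (1), (3), (4), (5). -/
inductive MMAStep [DecidableEq V] : EqSet F V → EqSet F V → Prop
  | decomp {E : EqSet F V} {f : F} {ss ts : List (Term F V)} :
      (Term.app f ss, Term.app f ts) ∈ E → ss.length = ts.length →
      MMAStep E ((E \ {(Term.app f ss, Term.app f ts)}) ∪ {e | e ∈ ss.zip ts})
  | del {E : EqSet F V} {X : V} : (Term.var X, Term.var X) ∈ E →
      MMAStep E (E \ {(Term.var X, Term.var X)})
  | orient {E : EqSet F V} {X : V} {t : Term F V} : (t, Term.var X) ∈ E → ¬ t.IsVar →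
      MMAStep E ((E \ {(t, Term.var X)}) ∪ {(Term.var X, t)})
  | elim {E : EqSet F V} {X : V} {t : Term F V} :
      (Term.var X, t) ∈ E → Term.var X ≠ t → ¬ Term.VarIn X t →
      occursElsewhere X (Term.var X, t) E →
      MMAStep E (insert (Term.var X, t) (Eqn.subst (subst1 X t) '' (E \ {(Term.var X, t)})))

/-- `E'` is reachable from `E` by (non-failing) MMA steps. -/
def MMAReach [DecidableEq V] (E E' : EqSet F V) : Prop := Relation.ReflTransGen MMAStep E E'

/-- `E` is not subject to occur-check: no run of MMA on `E` performs action (6),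
i.e. action (6) is not applicable to any equation set reachable by MMA from `E`. -/
def NSTO [DecidableEq V] (E : EqSet F V) : Prop :=
  ∀ E', MMAReach E E' → ¬ OccApplicable E'

/-- A solved equation set: `X₁=t₁, …, Xₙ=tₙ` with `X₁,…,Xₙ` distinct variables
none of which occurs in any `tᵢ`. -/
def SolvedSet (E : EqSet F V) : Prop :=
  (∀ e ∈ E, ∃ X, e.1 = Term.var X) ∧
  (∀ e ∈ E, ∀ e' ∈ E, e.1 = e'.1 → e = e') ∧
  (∀ e ∈ E, ∀ e' ∈ E, ∀ X, e.1 = Term.var X → ¬ Term.VarIn X e'.2)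

/-- The relation `X ≻_E Y`: for some equation `X = t` of `E`, `Y ∈ Var(t)`. -/
def succRel (E : EqSet F V) (X Y : V) : Prop := ∃ t, (Term.var X, t) ∈ E ∧ Term.VarIn Y t

/-- A semi-solved equation set: `X₁=t₁, …, Xₙ=tₙ` with `X₁,…,Xₙ` distinct variables,
no `tᵢ` equal to `Xᵢ`, and whenever `Xᵢ` occurs in some `tₖ` then `Xᵢ ≻⁺_E Xᵢ`. -/
def SemiSolved (E : EqSet F V) : Prop :=
  (∀ e ∈ E, ∃ X, e.1 = Term.var X) ∧
  (∀ e ∈ E, ∀ e' ∈ E, e.1 = e'.1 → e = e') ∧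
  (∀ e ∈ E, e.1 ≠ e.2) ∧
  (∀ X, (∃ e' ∈ E, Term.VarIn X e'.2) → (∃ t, (Term.var X, t) ∈ E) →
    Relation.TransGen (succRel E) X X)

/-- `σ` is the substitution represented by the (solved) equation set `E`. -/
def Represents (E : EqSet F V) (σ : Subst F V) : Prop :=
  ∀ v, (∃ t, (Term.var v, t) ∈ E ∧ σ v = t) ∨ ((∀ t, (Term.var v, t) ∉ E) ∧ σ v = Term.var v)

/-- There is an occur-check free run of MMA on `E`: a maximal run never performing
action (6), hence ending either by action (2) (failure on a clash) or with success
(no action applicable any more, the final set being solved). (MMA always terminates,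
so runs are finite.) -/
def ExistsOCFreeRun [DecidableEq V] (E : EqSet F V) : Prop :=
  ∃ E', MMAReach E E' ∧ (Clash E' ∨ SolvedSet E')

/-- `u` is obtained from `s` by replacing *some* of the occurrences of the variable `X`
by the term `t`. -/
inductive ReplSome [DecidableEq V] (X : V) (t : Term F V) : Term F V → Term F V → Prop
  | keep (v : V) : ReplSome X t (Term.var v) (Term.var v)
  | repl : ReplSome X t (Term.var X) t
  | app {f : F} {ss ts : List (Term F V)} :
      List.Forall₂ (ReplSome X t) ss ts → ReplSome X t (Term.app f ss) (Term.app f ts)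

def ReplSomeEqn [DecidableEq V] (X : V) (t : Term F V) (e e' : Eqn F V) : Prop :=
  ReplSome X t e.1 e'.1 ∧ ReplSome X t e.2 e'.2

/-- The labels of the actions of MMA⁻. -/
inductive MLabel (F V : Type) where
  | decomp | del | orient
  | elim (X : V) (t : Term F V)
  | elim' (X : V) (t : Term F V)

/-- A configuration of MMA⁻: the current equation set together with the set of
variables on which action (5) has already been performed. -/
abbrev MState (F V : Type) := EqSet F V × Set V

/-- A (non-failing) step of MMA⁻, labelled by the action used: actions (1), (3), (4),
(5) (with condition `X ≠ t` instead of the occur-check `X ∉ Var(t)`), and (5')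
(replacing some occurrences of `X` by `t` in the other equations, allowed only if
action (5) has previously been performed on an equation with left-hand side `X`). -/
inductive MMStepL [DecidableEq V] : MLabel F V → MState F V → MState F V → Prop
  | decomp {E : EqSet F V} {H : Set V} {f : F} {ss ts : List (Term F V)} :
      (Term.app f ss, Term.app f ts) ∈ E → ss.length = ts.length →
      MMStepL MLabel.decomp (E, H)
        ((E \ {(Term.app f ss, Term.app f ts)}) ∪ {e | e ∈ ss.zip ts}, H)
  | del {E : EqSet F V} {H : Set V} {X : V} : (Term.var X, Term.var X) ∈ E →
      MMStepL MLabel.del (E, H) (E \ {(Term.var X, Term.var X)}, H)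
  | orient {E : EqSet F V} {H : Set V} {X : V} {t : Term F V} :
      (t, Term.var X) ∈ E → ¬ t.IsVar →
      MMStepL MLabel.orient (E, H) ((E \ {(t, Term.var X)}) ∪ {(Term.var X, t)}, H)
  | elim {E : EqSet F V} {H : Set V} {X : V} {t : Term F V} :
      (Term.var X, t) ∈ E → Term.var X ≠ t →
      occursElsewhere X (Term.var X, t) E →
      MMStepL (MLabel.elim X t) (E, H)
        (insert (Term.var X, t) (Eqn.subst (subst1 X t) '' (E \ {(Term.var X, t)})),
         insert X H)
  | elim' {E : EqSet F V} {H : Set V} {X : V} {t : Term F V} {g : Eqn F V → Eqn F V} :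
      (Term.var X, t) ∈ E → Term.var X ≠ t →
      occursElsewhere X (Term.var X, t) E → X ∈ H →
      (∀ e ∈ E \ {(Term.var X, t)}, ReplSomeEqn X t e (g e)) →
      MMStepL (MLabel.elim' X t) (E, H)
        (insert (Term.var X, t) (g '' (E \ {(Term.var X, t)})), H)

/-- A (non-failing) step of MMA⁻. -/
def MMStep [DecidableEq V] (s s' : MState F V) : Prop := ∃ l, MMStepL l s s'

/-- Reachability by (non-failing) steps of MMA⁻. A run of MMA⁻ on an equation set `E`
starts in the configuration `(E, ∅)`; it terminates with failure when action (2) is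
performed (a clash is present), and it may terminate with success when the current
equation set is semi-solved. -/
def MMReach [DecidableEq V] (s s' : MState F V) : Prop := Relation.ReflTransGen MMStep s s'


/-! ## Auxiliary lemmas -/

namespace Term

theorem subst_app' {F V : Type} (σ : Subst F V) (f : F) (ts : List (Term F V)) :
    (Term.app f ts).subst σ = Term.app f (ts.map (Term.subst σ)) := by
  simp [Term.subst, List.attach_map_val]

theorem subst_var {F V : Type} (σ : Subst F V) (x : V) :
    (Term.var x).subst σ = σ x := by simp [Term.subst]

def size {F V : Type} : Term F V → ℕ
  | var _ => 1
  | app _ ts => 1 + (ts.attach.map fun ⟨t, _⟩ => t.size).sum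

theorem size_app {F V : Type} (f : F) (ts : List (Term F V)) :
    (Term.app f ts).size = 1 + (ts.map size).sum := by
  simp [size, List.attach_map_val]

theorem size_lt_of_mem {F V : Type} {t : Term F V} {ts : List (Term F V)} {f : F}
    (h : t ∈ ts) : t.size < (Term.app f ts).size := by
  have : t.size ≤ (ts.map size).sum :=
    List.single_le_sum (fun _ _ => Nat.zero_le _) _ (List.mem_map.2 ⟨t, h, rfl⟩)
  rw [size_app]; omega

theorem subst_subst {F V : Type} (σ θ : Subst F V) :
    ∀ s : Term F V, (s.subst σ).subst θ = s.subst (fun v => (σ v).subst θ)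
  | var x => by simp only [Term.subst]
  | app f ts => by
    simp only [subst_app', List.map_map]
    congr 1
    refine List.map_congr_left fun t ht => ?_
    exact subst_subst σ θ t
termination_by s => s.size
decreasing_by exact size_lt_of_mem ht

end Term

theorem subst1_subst {F V : Type} [DecidableEq V] {X : V} {t : Term F V} {θ : Subst F V}
    (hX : θ X = t.subst θ) (s : Term F V) :
    (s.subst (subst1 X t)).subst θ = s.subst θ := by
  rw [Term.subst_subst]
  congr 1
  funext v
  by_cases hv : v = X
  · subst hv; simp [subst1, Term.subst, hX]
  · simp [subst1, hv, Term.subst]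

theorem forall₂_map_eq {α β : Type} {R : α → α → Prop} {f : α → β} :
    ∀ {ss ts : List α}, List.Forall₂ R ss ts →
      (∀ a ∈ ss, ∀ b, R a b → f a = f b) → ss.map f = ts.map f := by
  intro ss ts h
  induction h with
  | nil => intro _; rfl
  | cons hab htail ih =>
    intro hf
    simp only [List.map_cons]
    rw [hf _ List.mem_cons_self _ hab,
      ih fun a ha b hr => hf a (List.mem_cons_of_mem _ ha) b hr]

theorem replSome_subst {F V : Type} [DecidableEq V] {X : V} {t : Term F V} {θ : Subst F V}
    (hX : θ X = t.subst θ) :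
    ∀ (s u : Term F V), ReplSome X t s u → s.subst θ = u.subst θ
  | _, _, ReplSome.keep v => rfl
  | _, _, ReplSome.repl => by simpa [Term.subst] using hX
  | _, _, ReplSome.app h => by
    simp only [Term.subst_app']
    congr 1
    exact forall₂_map_eq h fun a ha b hab => replSome_subst hX a b hab
termination_by s _ _ => s.size
decreasing_by exact Term.size_lt_of_mem ha

theorem map_eq_map_iff_zip {α β : Type} (f : α → β) :
    ∀ {ss ts : List α}, ss.length = ts.length →
      (ss.map f = ts.map f ↔ ∀ p ∈ ss.zip ts, f p.1 = f p.2)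
  | [], [], _ => by simp
  | [], _ :: _, h => by simp at h
  | _ :: _, [], h => by simp at h
  | a :: ss, b :: ts, h => by
    simp only [List.map_cons, List.zip_cons_cons, List.mem_cons, List.cons.injEq]
    rw [map_eq_map_iff_zip f (by simpa using h)]
    constructor
    · rintro ⟨h1, h2⟩ p hp
      rcases hp with rfl | hp
      · exact h1
      · exact h2 p hp
    · intro hall
      exact ⟨hall _ (Or.inl rfl), fun p hp => hall p (Or.inr hp)⟩

/-- Each action of MMA⁻ (actions (1), (3), (4), (5), (5')) preserves
the set of unifiers: `θ` is a unifier of the equation set before the step iff it is a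
unifier of the equation set after the step. -/
theorem stmt9 {F V : Type} [DecidableEq V] (l : MLabel F V) (s s' : MState F V)
    (h : MMStepL l s s') (θ : Subst F V) :
    IsUnifier θ s.1 ↔ IsUnifier θ s'.1 := by
  cases h with
  | decomp hmem hlen =>
    rename_i E H f ss ts
    constructor
    · intro hu e he
      rcases he with ⟨heE, _⟩ | hzip
      · exact hu e heE
      · have h0 := hu _ hmem
        simp only [Term.subst_app', Term.app.injEq, true_and] at h0
        exact (map_eq_map_iff_zip (Term.subst θ) hlen).1 h0 e hzip
    · intro hu e he
      by_cases heq : e = (Term.app f ss, Term.app f ts)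
      · subst heq
        simp only [Term.subst_app', Term.app.injEq, true_and]
        exact (map_eq_map_iff_zip (Term.subst θ) hlen).2
          (fun p hp => hu p (Or.inr hp))
      · exact hu e (Or.inl ⟨he, heq⟩)
  | del hmem =>
    rename_i E H X
    constructor
    · intro hu e he
      exact hu e he.1
    · intro hu e he
      by_cases heq : e = (Term.var X, Term.var X)
      · subst heq; rfl
      · exact hu e ⟨he, heq⟩
  | orient hmem hnv =>
    rename_i E H X t
    constructor
    · intro hu e he
      rcases he with ⟨heE, _⟩ | he
      · exact hu e heE
      · rcases he with rfl
        exact (hu _ hmem).symm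
    · intro hu e he
      by_cases heq : e = (t, Term.var X)
      · subst heq
        exact (hu (Term.var X, t) (Or.inr rfl)).symm
      · exact hu e (Or.inl ⟨he, heq⟩)
  | elim hmem hne hocc =>
    rename_i E H X t
    constructor
    · intro hu
      have hX : θ X = t.subst θ := by simpa [Term.subst_var] using hu _ hmem
      intro e he
      rcases he with rfl | ⟨e₀, ⟨he₀, _⟩, rfl⟩
      · simpa [Term.subst_var] using hX
      · show (e₀.1.subst (subst1 X t)).subst θ = (e₀.2.subst (subst1 X t)).subst θ
        rw [subst1_subst hX, subst1_subst hX]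
        exact hu _ he₀
    · intro hu
      have hX : θ X = t.subst θ := by simpa [Term.subst_var] using hu _ (Set.mem_insert _ _)
      intro e he
      by_cases heq : e = (Term.var X, t)
      · subst heq; simpa [Term.subst_var] using hX
      · have := hu (Eqn.subst (subst1 X t) e)
          (Set.mem_insert_of_mem _ ⟨e, ⟨he, heq⟩, rfl⟩)
        show e.1.subst θ = e.2.subst θ
        rwa [show (Eqn.subst (subst1 X t) e).1 = e.1.subst (subst1 X t) from rfl,
          show (Eqn.subst (subst1 X t) e).2 = e.2.subst (subst1 X t) from rfl,
          subst1_subst hX, subst1_subst hX] at this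
  | elim' hmem hne hocc hH hg =>
    rename_i E H X t g
    constructor
    · intro hu
      have hX : θ X = t.subst θ := by simpa [Term.subst_var] using hu _ hmem
      intro e he
      rcases he with rfl | ⟨e₀, he₀, rfl⟩
      · simpa [Term.subst_var] using hX
      · obtain ⟨h1, h2⟩ := hg e₀ he₀
        rw [← replSome_subst hX _ _ h1, ← replSome_subst hX _ _ h2]
        exact hu _ he₀.1
    · intro hu
      have hX : θ X = t.subst θ := by simpa [Term.subst_var] using hu _ (Set.mem_insert _ _)
      intro e he
      by_cases heq : e = (Term.var X, t)
      · subst heq; simpa [Term.subst_var] using hX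
      · obtain ⟨h1, h2⟩ := hg e ⟨he, heq⟩
        have := hu (g e) (Set.mem_insert_of_mem _ ⟨e, ⟨he, heq⟩, rfl⟩)
        show e.1.subst θ = e.2.subst θ
        rw [replSome_subst hX _ _ h1, replSome_subst hX _ _ h2]
        exact this
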